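/- For u(z) = α/(1−pz) with |p| < 1, the function u(t,z) = e^{−iωt} u₀(e^{−ict} z) with ω = |α|²/(1−|p|²)² and c = |α|²/(1−|p|²) is an exact solution of the cubic Szegő equation i∂_t u = Π(|u|²u). -/

import Mathlib

noncomputable section

open MeasureTheory Real AddCircle

instance : Fact (0 < 2 * π) := ⟨by positivity⟩

section Aux

variable {T : ℝ} [hT : Fact (0 < T)]

lemma myFourierCoeff_fourier (m n : ℤ) :
    fourierCoeff (⇑(@fourier T m)) n = if m = n then 1 else 0 := by
  rw [← fourierCoeff_toLp (fourier m) n]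
  rw [show ContinuousMap.toLp (E := ℂ) 2 haarAddCircle ℂ (fourier m) = fourierLp 2 m from rfl]
  rw [← fourierBasis_repr]
  rw [show (fourierLp 2 m : Lp ℂ 2 (@haarAddCircle T hT)) = fourierBasis m by
    rw [coe_fourierBasis]]
  rw [fourierBasis.repr_self m]
  rw [lp.single_apply]
  by_cases h : m = n
  · subst h; simp
  · rw [Pi.single_apply, if_neg (fun h' => h h'.symm), if_neg h]

lemma myIntegral_fourier (k : ℤ) :
    ∫ x : AddCircle T, (fourier k x : ℂ) ∂haarAddCircle = if k = 0 then 1 else 0 := by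
  have := myFourierCoeff_fourier (T := T) k 0
  rw [fourierCoeff] at this
  simpa [fourier_zero] using this

omit hT in
lemma fourier_norm_one (k : ℤ) (x : AddCircle T) : ‖(fourier k x : ℂ)‖ = 1 := by
  simp [fourier_apply, Circle.norm_coe]

lemma myFourierCoeff_of_hasSum (c : ℤ → ℂ) (hc : Summable fun m => ‖c m‖)
    (f : AddCircle T → ℂ) (hf : ∀ x, HasSum (fun m => c m * fourier m x) (f x)) (n : ℤ) :
    fourierCoeff f n = c n := by
  have key : ∀ x : AddCircle T, (fourier (-n) x : ℂ) • f x
      = ∑' m : ℤ, c m * fourier (m + -n) x := by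
    intro x
    have h1 : HasSum (fun m : ℤ => c m * fourier (m + -n) x)
        ((fourier (-n) x : ℂ) * f x) := by
      have h2 := (hf x).mul_left (fourier (-n) x : ℂ)
      refine HasSum.congr_fun h2 fun m => ?_
      rw [fourier_add]
      ring
    simpa [smul_eq_mul] using h1.tsum_eq.symm
  rw [fourierCoeff]
  simp_rw [key]
  rw [integral_tsum (f := fun m x => c m * fourier (m + -n) x)
    (fun m => (Continuous.aestronglyMeasurable (continuous_const.mul (fourier (m + -n)).continuous))) ?_]
  · have h3 : ∀ m : ℤ, ∫ x : AddCircle T, c m * fourier (m + -n) x ∂haarAddCircle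
        = c m * (if m + -n = 0 then 1 else 0) := by
      intro m
      rw [MeasureTheory.integral_const_mul, myIntegral_fourier]
    simp_rw [h3]
    rw [tsum_eq_single n (fun m hm => by simp [sub_eq_zero, hm]; intro h; omega)]
    simp
  · have h4 : ∀ m : ℤ, ∫⁻ x : AddCircle T, ‖c m * fourier (m + -n) x‖₊ ∂haarAddCircle
        = (‖c m‖₊ : ENNReal) := by
      intro m
      have : ∀ x : AddCircle T, (‖c m * fourier (m + -n) x‖₊ : ENNReal) = (‖c m‖₊ : ENNReal) := by
        intro x
        congr 1
        ext
        simp [nnnorm, norm_mul, fourier_norm_one, Circle.norm_coe]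
      simp_rw [this]
      simp [lintegral_const]
    simp_rw [enorm_eq_nnnorm, h4]
    exact ENNReal.tsum_coe_ne_top_iff_summable.2 (by
      exact NNReal.summable_coe.1 (by simpa using hc))

omit hT in
lemma fourier_zpow (n : ℤ) (x : AddCircle T) :
    (fourier n x : ℂ) = (toCircle x : ℂ) ^ n := by
  have hz : (toCircle x : ℂ) ≠ 0 := Circle.coe_ne_zero _
  induction n using Int.induction_on with
  | zero => simp [fourier_zero]
  | succ k ih =>
      have : ((k : ℤ) + 1) = (k : ℤ) + 1 := rfl
      rw [fourier_add, ih, fourier_one, zpow_add_one₀ hz]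
  | pred k ih =>
      rw [show (-(k:ℤ) - 1) = (-(k:ℤ)) + (-1) by ring, fourier_add, ih, zpow_add₀ hz]
      congr 1
      rw [fourier_neg, fourier_one, zpow_neg, zpow_one]
      exact (Circle.coe_inv_eq_conj _).symm ▸ (Circle.coe_inv _)

omit hT in
lemma one_sub_ne_zero_of_norm_lt_one {w : ℂ} (h : ‖w‖ < 1) : (1 : ℂ) - w ≠ 0 := by
  intro h0
  have : w = 1 := by linear_combination -h0
  rw [this] at h; simp at h

/-- Fourier coefficients of `x ↦ A0 / (1 - q z)`. -/
lemma coeff_aux1 (A0 q : ℂ) (hq : ‖q‖ < 1) (f : AddCircle T → ℂ)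
    (hf : ∀ x, f x = A0 * (1 - q * (toCircle x : ℂ))⁻¹) (n : ℤ) :
    fourierCoeff f n = Int.rec (fun k => A0 * q ^ k) (fun _ => (0:ℂ)) n := by
  apply myFourierCoeff_of_hasSum
  · have heq : (fun m : ℤ => ‖(Int.rec (fun k => A0 * q ^ k) (fun _ => (0:ℂ)) m : ℂ)‖)
        = Int.rec (fun k => ‖A0‖ * ‖q‖ ^ k) (fun _ => (0:ℝ)) := by
      funext m
      cases m with
      | ofNat k => show ‖A0 * q ^ k‖ = ‖A0‖ * ‖q‖ ^ k; rw [norm_mul, norm_pow]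
      | negSucc k => show ‖(0:ℂ)‖ = (0:ℝ); simp
    rw [heq]
    exact Summable.int_rec ((summable_geometric_of_lt_one (norm_nonneg q) hq).mul_left _)
      summable_zero
  · intro x
    set z : ℂ := (toCircle x : ℂ) with hzdef
    have hz : ‖z‖ = 1 := by simp [hzdef, Circle.norm_coe]
    have hqz : ‖q * z‖ < 1 := by rw [norm_mul, hz, mul_one]; exact hq
    have h1 : HasSum (fun k : ℕ => (A0 * q ^ k) * (fourier (k : ℤ) x : ℂ))
        (A0 * (1 - q * z)⁻¹) := by
      refine HasSum.congr_fun ((hasSum_geometric_of_norm_lt_one hqz).mul_left A0) fun k => ?_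
      rw [fourier_zpow, ← hzdef, zpow_natCast, mul_pow]
      ring
    have h2 : HasSum (fun k : ℕ => (0:ℂ) * (fourier (Int.negSucc k) x : ℂ)) 0 := by
      simpa using (hasSum_zero : HasSum (fun _ : ℕ => (0:ℂ)) 0)
    have h3 := h1.int_rec h2
    rw [add_zero] at h3
    rw [hf x]
    refine HasSum.congr_fun h3 fun m => ?_
    cases m with
    | ofNat k => rfl
    | negSucc k => rfl

set_option maxHeartbeats 2000000 in
/-- Fourier coefficients of `x ↦ K0 / ((1 - q z)^2 (1 - q̄ z⁻¹))`. -/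
lemma coeff_aux2 (K0 q A B C : ℂ) (hq : ‖q‖ < 1)
    (hA : A = q * (starRingEnd ℂ) q / (1 - q * (starRingEnd ℂ) q) ^ 2)
    (hB : B = 1 / (1 - q * (starRingEnd ℂ) q))
    (hC : C = (starRingEnd ℂ) q / (1 - q * (starRingEnd ℂ) q) ^ 2)
    (g : AddCircle T → ℂ)
    (hg : ∀ x, g x = K0 * (((1 - q * (toCircle x : ℂ)) ^ 2
      * (1 - (starRingEnd ℂ) q * (toCircle x : ℂ)⁻¹))⁻¹)) (n : ℤ) :
    fourierCoeff g n = Int.rec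
      (fun k : ℕ => K0 * (A + ((k : ℂ) + 1) * B) * q ^ k)
      (fun k : ℕ => K0 * C * ((starRingEnd ℂ) q) ^ k) n := by
  have hqcn : ‖(starRingEnd ℂ) q‖ = ‖q‖ := by simp
  have hqqc : ‖q * (starRingEnd ℂ) q‖ < 1 := by
    rw [norm_mul, hqcn]; nlinarith [norm_nonneg q]
  have hd : (1 : ℂ) - q * (starRingEnd ℂ) q ≠ 0 := one_sub_ne_zero_of_norm_lt_one hqqc
  apply myFourierCoeff_of_hasSum
  · -- summability of the norms of the coefficients
    have S1 : Summable (fun k : ℕ => ((k : ℝ) + 1) * ‖q‖ ^ k) := by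
      have h1 : Summable (fun k : ℕ => (k : ℝ) * ‖q‖ ^ k) := by
        have := summable_pow_mul_geometric_of_norm_lt_one (R := ℝ) 1
          (r := ‖q‖) (by rwa [Real.norm_of_nonneg (norm_nonneg q)])
        simpa using this
      have h2 : Summable (fun k : ℕ => ‖q‖ ^ k) :=
        summable_geometric_of_lt_one (norm_nonneg q) hq
      simpa [add_mul, one_mul] using h1.add h2
    apply Summable.of_nonneg_of_le (fun m => norm_nonneg _)
      (f := fun m : ℤ => Int.rec
        (fun k : ℕ => (‖K0‖ * (‖A‖ + ‖B‖)) * (((k : ℝ) + 1) * ‖q‖ ^ k))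
        (fun k : ℕ => ‖K0 * C‖ * ‖(starRingEnd ℂ) q‖ ^ k) m)
    · intro m
      cases m with
      | ofNat k =>
          show ‖K0 * (A + ((k : ℂ) + 1) * B) * q ^ k‖
            ≤ (‖K0‖ * (‖A‖ + ‖B‖)) * (((k : ℝ) + 1) * ‖q‖ ^ k)
          have hnk : ‖((k : ℂ) + 1)‖ = (k : ℝ) + 1 := by
            rw [show ((k : ℂ) + 1) = ((k + 1 : ℕ) : ℂ) by push_cast; ring,
              Complex.norm_natCast]
            push_cast; ring
          have h4 : ‖A + ((k : ℂ) + 1) * B‖ ≤ (‖A‖ + ‖B‖) * ((k : ℝ) + 1) :=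
            calc ‖A + ((k : ℂ) + 1) * B‖ ≤ ‖A‖ + ‖((k : ℂ) + 1)‖ * ‖B‖ := by
                  refine (norm_add_le _ _).trans ?_; rw [norm_mul]
              _ = ‖A‖ + ((k : ℝ) + 1) * ‖B‖ := by rw [hnk]
              _ ≤ (‖A‖ + ‖B‖) * ((k : ℝ) + 1) := by
                  nlinarith [norm_nonneg A, norm_nonneg B, Nat.cast_nonneg (α := ℝ) k]
          calc ‖K0 * (A + ((k : ℂ) + 1) * B) * q ^ k‖
              = ‖K0‖ * ‖A + ((k : ℂ) + 1) * B‖ * ‖q‖ ^ k := by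
                rw [norm_mul, norm_mul, norm_pow]
            _ ≤ ‖K0‖ * ((‖A‖ + ‖B‖) * ((k : ℝ) + 1)) * ‖q‖ ^ k := by gcongr
            _ = (‖K0‖ * (‖A‖ + ‖B‖)) * (((k : ℝ) + 1) * ‖q‖ ^ k) := by ring
      | negSucc k =>
          show ‖K0 * C * ((starRingEnd ℂ) q) ^ k‖ ≤ ‖K0 * C‖ * ‖(starRingEnd ℂ) q‖ ^ k
          rw [norm_mul, norm_pow]
    · exact Summable.int_rec (S1.mul_left _)
        ((summable_geometric_of_lt_one (norm_nonneg _) (hqcn ▸ hq)).mul_left _)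
  · intro x
    set z : ℂ := (toCircle x : ℂ) with hzdef
    have hz : ‖z‖ = 1 := by simp [hzdef, Circle.norm_coe]
    have hz0 : z ≠ 0 := by rw [hzdef]; exact Circle.coe_ne_zero _
    have hqz : ‖q * z‖ < 1 := by rw [norm_mul, hz, mul_one]; exact hq
    have hqz' : ‖(starRingEnd ℂ) q * z⁻¹‖ < 1 := by
      rw [norm_mul, norm_inv, hz, hqcn, inv_one, mul_one]; exact hq
    have hw : (1 : ℂ) - q * z ≠ 0 := one_sub_ne_zero_of_norm_lt_one hqz
    have hw' : (1 : ℂ) - (starRingEnd ℂ) q * z⁻¹ ≠ 0 := one_sub_ne_zero_of_norm_lt_one hqz'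
    -- positive part
    have h1 : HasSum (fun k : ℕ => (K0 * (A + ((k : ℂ) + 1) * B) * q ^ k) * (fourier (k : ℤ) x : ℂ))
        (K0 * (A + B) * (1 - q * z)⁻¹ + K0 * B * ((q * z) / (1 - q * z) ^ 2)) := by
      have hg1 := (hasSum_geometric_of_norm_lt_one hqz).mul_left (K0 * (A + B))
      have hg2 := (hasSum_coe_mul_geometric_of_norm_lt_one hqz).mul_left (K0 * B)
      refine HasSum.congr_fun (hg1.add hg2) fun k => ?_
      rw [fourier_zpow, ← hzdef, zpow_natCast, mul_pow]
      ring
    -- negative part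
    have h2 : HasSum (fun k : ℕ => (K0 * C * ((starRingEnd ℂ) q) ^ k) * (fourier (Int.negSucc k) x : ℂ))
        (K0 * C * z⁻¹ * (1 - (starRingEnd ℂ) q * z⁻¹)⁻¹) := by
      have hg3 := (hasSum_geometric_of_norm_lt_one hqz').mul_left (K0 * C * z⁻¹)
      refine HasSum.congr_fun hg3 fun k => ?_
      rw [fourier_zpow, ← hzdef, zpow_negSucc, mul_pow, inv_pow, pow_succ, mul_inv_rev]
      ring
    have h3 := h1.int_rec h2
    have hfun : (fun m : ℤ => (Int.rec
        (fun k : ℕ => K0 * (A + ((k : ℂ) + 1) * B) * q ^ k)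
        (fun k : ℕ => K0 * C * ((starRingEnd ℂ) q) ^ k) m : ℂ) * (fourier m x : ℂ))
        = Int.rec
          (fun k : ℕ => (K0 * (A + ((k : ℂ) + 1) * B) * q ^ k) * (fourier (k : ℤ) x : ℂ))
          (fun k : ℕ => (K0 * C * ((starRingEnd ℂ) q) ^ k) * (fourier (Int.negSucc k) x : ℂ)) := by
      funext m
      cases m with
      | ofNat k => rfl
      | negSucc k => rfl
    rw [hfun]
    convert h3 using 1
    rw [hg x, ← hzdef, eq_comm, hA, hB, hC]
    have hv : (1:ℂ) - (starRingEnd ℂ) q * z⁻¹ = (z - (starRingEnd ℂ) q)/z := by field_simp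
    have hzqc : z - (starRingEnd ℂ) q ≠ 0 := by
      intro h0; apply hw'; rw [hv, h0, zero_div]
    have hab : q * (starRingEnd ℂ) q / (1 - q * (starRingEnd ℂ) q) ^ 2
        + 1 / (1 - q * (starRingEnd ℂ) q) = 1 / (1 - q * (starRingEnd ℂ) q) ^ 2 := by
      field_simp
      ring
    rw [hv, hab]
    field_simp
    ring

omit hT in
lemma toCircle_real [Fact (0 < 2 * π)] (r : ℝ) :
    ((toCircle ((r : ℝ) : AddCircle (2 * π)) : Circle) : ℂ) = Complex.exp (r * Complex.I) := by
  rw [← fourier_one (T := 2 * π)]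
  rw [fourier_coe_apply]
  congr 1
  have hπ : (π : ℂ) ≠ 0 := by exact_mod_cast Real.pi_ne_zero
  push_cast
  field_simp

lemma scalar_id (A R : ℝ) (K : ℕ) (h : 1 - R ≠ 0) :
    A * (R / (1 - R) ^ 2 + ((K : ℝ) + 1) * (1 / (1 - R)))
      = A / (1 - R) ^ 2 + A / (1 - R) * K := by
  field_simp
  ring


end Aux

/-- The point of the unit circle in `ℂ` corresponding to `x ∈ ℝ/2πℤ`. -/
def circlePt (x : AddCircle (2 * π)) : ℂ := (AddCircle.toCircle x : ℂ)

/-- The traveling wave `u(t,z) = e^{−iωt} u₀(e^{−ict}z)` with `u₀(z) = α/(1−pz)`. -/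
def travWave (α p : ℂ) (ω c : ℝ) (t : ℝ) : AddCircle (2 * π) → ℂ :=
  fun x => Complex.exp (-Complex.I * ω * t) *
    (α / (1 - p * circlePt (x - ((c * t : ℝ) : AddCircle (2 * π)))))

/-- For `u₀(z) = α/(1−pz)`, `|p| < 1`, the function
`u(t,z) = e^{−iωt}u₀(e^{−ict}z)` with `ω = |α|²/(1−|p|²)²`, `c = |α|²/(1−|p|²)` is an
exact solution of the cubic Szegő equation `i∂_t u = Π(|u|²u)`: its negative Fourier
coefficients vanish and for every `n ≥ 0` the coefficient `û(t,n)` satisfies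
`∂_t û(n) = −i (|u|²u)^(n)`. -/
theorem stmt17 (α p : ℂ) (hp : ‖p‖ < 1) :
    (∀ t : ℝ, ∀ n : ℤ, n < 0 →
      fourierCoeff (travWave α p (‖α‖ ^ 2 / (1 - ‖p‖ ^ 2) ^ 2) (‖α‖ ^ 2 / (1 - ‖p‖ ^ 2)) t) n
        = 0) ∧
    ∀ t : ℝ, ∀ n : ℤ, 0 ≤ n →
      HasDerivAt
        (fun τ : ℝ => fourierCoeff
          (travWave α p (‖α‖ ^ 2 / (1 - ‖p‖ ^ 2) ^ 2) (‖α‖ ^ 2 / (1 - ‖p‖ ^ 2)) τ) n)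
        (-Complex.I * fourierCoeff
          (fun x => (‖travWave α p (‖α‖ ^ 2 / (1 - ‖p‖ ^ 2) ^ 2)
              (‖α‖ ^ 2 / (1 - ‖p‖ ^ 2)) t x‖ ^ 2 : ℂ) *
            travWave α p (‖α‖ ^ 2 / (1 - ‖p‖ ^ 2) ^ 2) (‖α‖ ^ 2 / (1 - ‖p‖ ^ 2)) t x) n)
        t := by
  have hr2 : ‖p‖ ^ 2 < 1 := by nlinarith [norm_nonneg p]
  have hr0 : (1 : ℝ) - ‖p‖ ^ 2 ≠ 0 := by nlinarith
  set ω : ℝ := ‖α‖ ^ 2 / (1 - ‖p‖ ^ 2) ^ 2 with hω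
  set c : ℝ := ‖α‖ ^ 2 / (1 - ‖p‖ ^ 2) with hc
  have hecirc : ∀ τ : ℝ, ‖((toCircle ((-(c * τ) : ℝ) : AddCircle (2 * π)) : Circle) : ℂ)‖ = 1 := by
    intro τ
    simp [Circle.norm_coe]
  have hq : ∀ τ : ℝ,
      ‖p * ((toCircle ((-(c * τ) : ℝ) : AddCircle (2 * π)) : Circle) : ℂ)‖ < 1 := by
    intro τ
    rw [norm_mul, hecirc τ, mul_one]
    exact hp
  have huval : ∀ (τ : ℝ) (x : AddCircle (2 * π)), travWave α p ω c τ x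
      = (Complex.exp (-Complex.I * ω * τ) * α) *
        (1 - (p * ((toCircle ((-(c * τ) : ℝ) : AddCircle (2 * π)) : Circle) : ℂ))
          * (toCircle x : ℂ))⁻¹ := by
    intro τ x
    show Complex.exp (-Complex.I * ω * τ) *
        (α / (1 - p * circlePt (x - ((c * τ : ℝ) : AddCircle (2 * π))))) = _
    rw [div_eq_mul_inv, ← mul_assoc]
    congr 2
    show (1 : ℂ) - p * (toCircle (x - ((c * τ : ℝ) : AddCircle (2 * π))) : ℂ) = _
    congr 1
    rw [show x - ((c * τ : ℝ) : AddCircle (2 * π)) = x + ((-(c * τ) : ℝ) : AddCircle (2 * π)) by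
      rw [sub_eq_add_neg]
      congr 1]
    rw [toCircle_add, Circle.coe_mul]
    ring
  constructor
  · -- negative Fourier coefficients vanish
    intro t n hn
    rw [coeff_aux1 _ _ (hq t) _ (huval t) n]
    obtain ⟨k, rfl⟩ : ∃ k : ℕ, n = Int.negSucc k :=
      ⟨(-(n+1)).toNat, by rw [Int.negSucc_eq]; omega⟩
    rfl
  · -- the ODE for the nonnegative Fourier coefficients
    intro t n hn
    obtain ⟨K, rfl⟩ : ∃ K : ℕ, n = (K : ℤ) := ⟨n.toNat, (Int.toNat_of_nonneg hn).symm⟩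
    set a : ℂ := -(Complex.I * (ω + c * K)) with ha
    have hGfun : ∀ τ : ℝ, fourierCoeff (travWave α p ω c τ) (K : ℤ)
        = (α * p ^ K) * Complex.exp (a * τ) := by
      intro τ
      rw [coeff_aux1 _ _ (hq τ) _ (huval τ) (K : ℤ)]
      show (Complex.exp (-Complex.I * ω * τ) * α)
          * (p * ((toCircle ((-(c * τ) : ℝ) : AddCircle (2 * π)) : Circle) : ℂ)) ^ K = _
      rw [toCircle_real, mul_pow, ← Complex.exp_nat_mul]
      rw [show Complex.exp (-Complex.I * ω * τ) * α
          * (p ^ K * Complex.exp (K * (((-(c * τ) : ℝ) : ℂ) * Complex.I)))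
          = (α * p ^ K) * (Complex.exp (-Complex.I * ω * τ)
            * Complex.exp (K * (((-(c * τ) : ℝ) : ℂ) * Complex.I))) from by ring]
      rw [← Complex.exp_add]
      rw [show -Complex.I * (ω : ℂ) * (τ : ℂ)
          + (K : ℂ) * (((-(c * τ) : ℝ) : ℂ) * Complex.I) = a * (τ : ℂ) from by
        rw [ha]; push_cast; ring]
    have hderiv : HasDerivAt (fun τ : ℝ => (α * p ^ K) * Complex.exp (a * τ))
        ((α * p ^ K) * (Complex.exp (a * t) * a)) t := by
      have h1 : HasDerivAt (fun τ : ℝ => a * (τ : ℂ)) a t := by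
        simpa using (Complex.ofRealCLM.hasDerivAt (x := t)).const_mul a
      exact h1.cexp.const_mul _
    simp only [hGfun]
    -- now compute the Fourier coefficient of the cubic term
    set e : ℂ := ((toCircle ((-(c * t) : ℝ) : AddCircle (2 * π)) : Circle) : ℂ) with he
    set E : ℂ := Complex.exp (-Complex.I * ω * t) with hE
    have hqq : (p * e) * (starRingEnd ℂ) (p * e) = ((‖p‖ ^ 2 : ℝ) : ℂ) := by
      rw [Complex.mul_conj]
      rw [show Complex.normSq (p * e) = ‖p * e‖ ^ 2 by
        rw [Complex.normSq_eq_norm_sq]]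
      rw [norm_mul, he, hecirc t, mul_one]
    have hrC : ((1 : ℂ) - ((‖p‖ ^ 2 : ℝ) : ℂ)) ≠ 0 := by
      rw [show (1 : ℂ) - ((‖p‖ ^ 2 : ℝ) : ℂ) = (((1 - ‖p‖ ^ 2 : ℝ)) : ℂ) by push_cast; ring]
      exact Complex.ofReal_ne_zero.mpr hr0
    have hnormsq : ∀ v : ℂ, ((‖v‖ : ℂ)) ^ 2 = v * (starRingEnd ℂ) v := by
      intro v
      rw [Complex.mul_conj]
      rw [show Complex.normSq v = ‖v‖ ^ 2 by rw [Complex.normSq_eq_norm_sq]]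
      push_cast
      ring
    have hEc : E * (starRingEnd ℂ) E = 1 := by
      rw [Complex.mul_conj, hE]
      simp [Complex.normSq_eq_norm_sq, Complex.norm_exp]
    have hαc : α * (starRingEnd ℂ) α = ((‖α‖ ^ 2 : ℝ) : ℂ) := by
      rw [Complex.mul_conj]
      rw [show Complex.normSq α = ‖α‖ ^ 2 by rw [Complex.normSq_eq_norm_sq]]
    have hcubic : ∀ x : AddCircle (2 * π),
        ((‖travWave α p ω c t x‖ : ℂ) ^ 2) * travWave α p ω c t x
        = (((‖α‖ ^ 2 : ℝ) : ℂ) * α * E) *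
          (((1 - (p * e) * (toCircle x : ℂ)) ^ 2
            * (1 - (starRingEnd ℂ) (p * e) * ((toCircle x : ℂ))⁻¹))⁻¹) := by
      intro x
      rw [huval t x]
      set z : ℂ := (toCircle x : ℂ) with hz
      have hz1 : ‖z‖ = 1 := by simp [hz, Circle.norm_coe]
      have hz0 : z ≠ 0 := by rw [hz]; exact Circle.coe_ne_zero _
      have hzc : (starRingEnd ℂ) z = z⁻¹ := by
        have := hnormsq z
        rw [hz1] at this
        simp only [Complex.ofReal_one, one_pow] at this
        field_simp [hz0]
        linear_combination -this
      have hwz : (1 : ℂ) - (p * e) * z ≠ 0 :=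
        one_sub_ne_zero_of_norm_lt_one (by rw [norm_mul, hz1, mul_one]; exact hq t)
      have hwz' : (1 : ℂ) - (starRingEnd ℂ) (p * e) * z⁻¹ ≠ 0 :=
        one_sub_ne_zero_of_norm_lt_one (by
          rw [norm_mul, norm_inv, hz1, inv_one, mul_one, RCLike.norm_conj]
          exact hq t)
      rw [hnormsq]
      rw [show (starRingEnd ℂ) ((E * α) * (1 - (p * e) * z)⁻¹)
          = ((starRingEnd ℂ) E * (starRingEnd ℂ) α)
            * (1 - (starRingEnd ℂ) (p * e) * z⁻¹)⁻¹ by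
        rw [map_mul, map_inv₀, map_mul, map_sub, map_one, map_mul, hzc]]
      rw [show ((E * α) * (1 - (p * e) * z)⁻¹)
            * (((starRingEnd ℂ) E * (starRingEnd ℂ) α)
              * (1 - (starRingEnd ℂ) (p * e) * z⁻¹)⁻¹)
            * ((E * α) * (1 - (p * e) * z)⁻¹)
          = (E * (starRingEnd ℂ) E) * (α * (starRingEnd ℂ) α) * (E * α)
            * ((1 - (p * e) * z)⁻¹ * (1 - (p * e) * z)⁻¹
              * (1 - (starRingEnd ℂ) (p * e) * z⁻¹)⁻¹) from by ring]
      rw [hEc, hαc]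
      rw [show ((1 - (p * e) * z) ^ 2 * (1 - (starRingEnd ℂ) (p * e) * z⁻¹))⁻¹
          = (1 - (p * e) * z)⁻¹ * (1 - (p * e) * z)⁻¹
            * (1 - (starRingEnd ℂ) (p * e) * z⁻¹)⁻¹ by
        rw [mul_inv, sq, mul_inv]]
      ring
    rw [coeff_aux2 (((‖α‖ ^ 2 : ℝ) : ℂ) * α * E) (p * e)
      (((‖p‖ ^ 2 : ℝ) : ℂ) / (1 - ((‖p‖ ^ 2 : ℝ) : ℂ)) ^ 2)
      (1 / (1 - ((‖p‖ ^ 2 : ℝ) : ℂ)))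
      ((starRingEnd ℂ) (p * e) / (1 - ((‖p‖ ^ 2 : ℝ) : ℂ)) ^ 2)
      (hq t) (by rw [hqq]) (by rw [hqq]) (by rw [hqq]) _ hcubic (K : ℤ)]
    have hExp : Complex.exp (a * (t : ℂ)) = E * e ^ K := by
      rw [hE, he, toCircle_real, ← Complex.exp_nat_mul, ← Complex.exp_add]
      congr 1
      rw [ha]
      push_cast
      ring
    show HasDerivAt _ (-Complex.I *
      ((((‖α‖ ^ 2 : ℝ) : ℂ) * α * E)
        * ((((‖p‖ ^ 2 : ℝ) : ℂ) / (1 - ((‖p‖ ^ 2 : ℝ) : ℂ)) ^ 2)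
          + ((K : ℂ) + 1) * (1 / (1 - ((‖p‖ ^ 2 : ℝ) : ℂ))))
        * (p * e) ^ K)) t
    have hcoefR : ‖α‖ ^ 2 * (‖p‖ ^ 2 / (1 - ‖p‖ ^ 2) ^ 2
        + ((K : ℝ) + 1) * (1 / (1 - ‖p‖ ^ 2))) = ω + c * K := by
      rw [hω, hc]
      exact scalar_id (‖α‖ ^ 2) (‖p‖ ^ 2) K hr0
    have hcoef : ((‖α‖ ^ 2 : ℝ) : ℂ) * (((‖p‖ ^ 2 : ℝ) : ℂ) / (1 - ((‖p‖ ^ 2 : ℝ) : ℂ)) ^ 2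
        + ((K : ℂ) + 1) * (1 / (1 - ((‖p‖ ^ 2 : ℝ) : ℂ))))
        = ((ω : ℝ) : ℂ) + ((c : ℝ) : ℂ) * (K : ℂ) := by
      exact_mod_cast hcoefR
    convert hderiv using 1
    rw [hExp, mul_pow, ha]
    linear_combination (-Complex.I * α * E * p ^ K * e ^ K) * hcoef
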